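/- Let R be a ring with 1, n ≥ 1, and A an n×n matrix over R. Let p(x) = λ_0 + λ_1 x + ⋯ + λ_{n−1} x^{n−1} + n!·x^n be the symmetric characteristic polynomial of A, and let D_0, D_1, …, D_n be the coefficient matrices determined by n·(xI − A)*(xI − A) = p(x)·I + D_0 + D_1 x + ⋯ + D_n x^n. Then the left Cayley–Hamilton identity (λ_0 I + D_0) + (λ_1 I + D_1)A + ⋯ + (λ_{n−1} I + D_{n−1})A^{n−1} + (n!·I + D_n)A^n = 0 holds. -/

import Mathlib

open Polynomial in
/-- The preadjoint `A*` of an `n × n` matrix `A` over a (possibly noncommutative) ring `R`: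
its `(r, s)` entry is the sum, over all permutations `τ, ρ` of `Fin n` with `τ s = s` and
`ρ s = r`, of `sgn ρ` times the ordered product
`a_{τ(1),ρ(τ(1))} ⋯ a_{τ(s-1),ρ(τ(s-1))} · a_{τ(s+1),ρ(τ(s+1))} ⋯ a_{τ(n),ρ(τ(n))}`
(the factor at position `s` is omitted). -/
def Matrix.preadjoint {n : ℕ} {R : Type*} [Ring R] (A : Matrix (Fin n) (Fin n) R) :
    Matrix (Fin n) (Fin n) R :=
  fun r s =>
    ∑ τ : Equiv.Perm (Fin n), ∑ ρ : Equiv.Perm (Fin n),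
      if τ s = s ∧ ρ s = r then
        ((Equiv.Perm.sign ρ : ℤ)) •
          (((List.finRange n).filter (fun k => k ≠ s)).map
            (fun k => A (τ k) (ρ (τ k)))).prod
      else 0

open Polynomial in
/-- The characteristic matrix `x·I - A` of `A`, as a matrix over `R[x]`. -/
noncomputable def Matrix.charMat {n : ℕ} {R : Type*} [Ring R] (A : Matrix (Fin n) (Fin n) R) :
    Matrix (Fin n) (Fin n) R[X] :=
  (X : R[X]) • (1 : Matrix (Fin n) (Fin n) R[X]) - A.map C

/-- The symmetric determinant `s-det A = tr(A* · A) = tr(A · A*)`. -/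
def Matrix.sdet {n : ℕ} {R : Type*} [Ring R] (A : Matrix (Fin n) (Fin n) R) : R :=
  Matrix.trace (A.preadjoint * A)

open Polynomial in
/-- The symmetric characteristic polynomial `p(x) = s-det(x·I - A) ∈ R[x]`. -/
noncomputable def Matrix.sCharPoly {n : ℕ} {R : Type*} [Ring R] (A : Matrix (Fin n) (Fin n) R) : R[X] :=
  A.charMat.sdet

open Polynomial

lemma charMat_apply' {n : ℕ} {R : Type*} [Ring R] (A : Matrix (Fin n) (Fin n) R) (i j : Fin n) :
    A.charMat i j = (if i = j then (X : R[X]) else 0) - C (A i j) := by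
  simp [Matrix.charMat, Matrix.sub_apply, Matrix.smul_apply, Matrix.one_apply, mul_ite, smul_eq_mul]

lemma charMat_natDegree_le {n : ℕ} {R : Type*} [Ring R] (A : Matrix (Fin n) (Fin n) R)
    (i j : Fin n) : (A.charMat i j).natDegree ≤ 1 := by
  rw [charMat_apply']
  refine (natDegree_sub_le _ _).trans ?_
  simp only [max_le_iff]
  constructor
  · split_ifs
    · exact natDegree_X_le
    · simp
  · simp

lemma preadjoint_charMat_coeff_eq_zero {n : ℕ} {R : Type*} [Ring R]
    (A : Matrix (Fin n) (Fin n) R) (hn : 1 ≤ n) (r s : Fin n) {k : ℕ} (hk : n ≤ k) :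
    (A.charMat.preadjoint r s).coeff k = 0 := by
  unfold Matrix.preadjoint
  rw [finset_sum_coeff]
  refine Finset.sum_eq_zero fun τ _ => ?_
  rw [finset_sum_coeff]
  refine Finset.sum_eq_zero fun ρ _ => ?_
  split_ifs with h
  · rw [coeff_smul]
    have hlen : ((List.finRange n).filter (fun k => k ≠ s)).length ≤ n - 1 := by
      have : (List.finRange n).filter (fun k => k ≠ s) = (List.finRange n).erase s := by
        rw [List.Nodup.erase_eq_filter (List.nodup_finRange n)]
        apply List.filter_congr
        intro x _
        simp only [decide_not, bne, ne_eq]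
        by_cases hx : x = s <;> simp [hx]
      rw [this, List.length_erase_of_mem (List.mem_finRange s), List.length_finRange]
    have hdeg : ((((List.finRange n).filter (fun k => k ≠ s)).map
        (fun k => A.charMat (τ k) (ρ (τ k)))).prod).natDegree < k := by
      have h1 : ((((List.finRange n).filter (fun k => k ≠ s)).map
          (fun k => A.charMat (τ k) (ρ (τ k)))).prod).natDegree ≤ n - 1 := by
        refine (natDegree_list_prod_le _).trans ?_
        refine (List.sum_le_card_nsmul _ 1 ?_).trans ?_
        · intro x hx
          simp only [List.mem_map] at hx
          obtain ⟨q, ⟨a, _, rfl⟩, rfl⟩ := hx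
          exact charMat_natDegree_le A _ _
        · simpa using hlen
      exact lt_of_le_of_lt h1 (lt_of_lt_of_le (Nat.sub_lt hn Nat.one_pos) hk)
    rw [coeff_eq_zero_of_natDegree_lt hdeg, smul_zero]
  · exact coeff_zero k

/-- Theorem 2.2 left Cayley-Hamilton. -/
theorem left_cayley_hamilton
    {n : ℕ} (hn : 1 ≤ n) {R : Type*} [Ring R] (A : Matrix (Fin n) (Fin n) R)
    (D : ℕ → Matrix (Fin n) (Fin n) R)
    (hD : ∀ k, ∀ i j : Fin n,
      D k i j = ((n • (A.charMat.preadjoint * A.charMat)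
        - A.sCharPoly • (1 : Matrix (Fin n) (Fin n) R[X])) i j).coeff k) :
    ∑ i ∈ Finset.range (n + 1),
      ((A.sCharPoly.coeff i) • (1 : Matrix (Fin n) (Fin n) R) + D i) * A ^ i = 0 := by
  classical
  set B := A.charMat.preadjoint with hB
  set E : ℕ → Matrix (Fin n) (Fin n) R :=
    fun k => Matrix.of fun i j => n • ((B i j).coeff k) with hE
  have hEn : E n = 0 := by
    ext i j
    simp [hE, hB, preadjoint_charMat_coeff_eq_zero A hn i j le_rfl]
  have step1 : ∀ k, (A.sCharPoly.coeff k) • (1 : Matrix (Fin n) (Fin n) R) + D k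
      = (if k = 0 then 0 else E (k - 1)) - E k * A := by
    intro k
    ext i j
    rw [Matrix.add_apply, hD k i j]
    simp only [Matrix.sub_apply, Matrix.smul_apply, Matrix.mul_apply, coeff_sub, coeff_smul,
      finset_sum_coeff, Matrix.one_apply, smul_eq_mul, hE, Matrix.of_apply, ← hB]
    have key : ∀ l : Fin n, (B i l * A.charMat l j).coeff k
        = (if l = j then (if k = 0 then 0 else (B i l).coeff (k - 1)) else 0)
          - (B i l).coeff k * A l j := by
      intro l
      rw [charMat_apply', mul_sub, coeff_sub, coeff_mul_C, mul_ite, mul_zero]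
      congr 1
      split_ifs with h1 h2
      · subst h2; exact coeff_mul_X_zero _
      · obtain ⟨m, rfl⟩ := Nat.exists_eq_succ_of_ne_zero h2
        simp [coeff_mul_X]
      · exact coeff_zero k
    simp only [key, Finset.sum_sub_distrib, Finset.sum_ite_eq', Finset.mem_univ, if_true,
      smul_sub]
    have hp : A.sCharPoly.coeff k * (if i = j then (1:R) else 0)
        = (A.sCharPoly * if i = j then (1:R[X]) else 0).coeff k := by
      split_ifs <;> simp
    rw [hp]
    simp only [apply_ite (fun M : Matrix (Fin n) (Fin n) R => M i j), Matrix.zero_apply,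
      Matrix.of_apply, Finset.smul_sum, smul_mul_assoc, smul_ite, smul_zero]
    abel
  calc ∑ k ∈ Finset.range (n + 1),
        ((A.sCharPoly.coeff k) • (1 : Matrix (Fin n) (Fin n) R) + D k) * A ^ k
      = ∑ k ∈ Finset.range (n + 1),
        ((if k = 0 then 0 else E (k - 1)) * A ^ k - E k * A ^ (k + 1)) := by
        refine Finset.sum_congr rfl fun k _ => ?_
        rw [step1, sub_mul, mul_assoc, ← pow_succ']
    _ = 0 := by
        rw [Finset.sum_sub_distrib, Finset.sum_range_succ' _ n, Finset.sum_range_succ]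
        simp [hEn]
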